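/- arXiv:1102.4375 — 2 statements merged into one kernel-verified Lean document; each statement's English description precedes it below -/
import Mathlib

section
/- With Σ⁻¹ = (GGᵀ)⁻¹ + Aᵀ(QQᵀ)⁻¹A, μ = Σ((GGᵀ)⁻¹ r + Aᵀ(QQᵀ)⁻¹ b), and K = A GGᵀ Aᵀ + QQᵀ, the minimum value φ of F(x) = ½(x−r)ᵀ(GGᵀ)⁻¹(x−r) + ½(Ax−b)ᵀ(QQᵀ)⁻¹(Ax−b) equals ½ (b − A r)ᵀ K⁻¹ (b − A r). -/
open Matrix

private lemma posDef_mul_transpose {n : ℕ} (M : Matrix (Fin n) (Fin n) ℝ)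
    (hM : IsUnit M.det) : (M * Mᵀ).PosDef := by
  refine posDef_iff_dotProduct_mulVec.2 ⟨?_, fun x hx => ?_⟩
  · rw [Matrix.IsHermitian, conjTranspose_eq_transpose_of_trivial, transpose_mul,
      transpose_transpose]
  · have hy : Mᵀ *ᵥ x ≠ 0 := by
      have hinj : Function.Injective (Mᵀ.mulVec) :=
        Matrix.mulVec_injective_iff_isUnit.2
          ((Matrix.isUnit_iff_isUnit_det _).2 (by simpa using hM))
      intro h
      exact hx (by simpa using hinj (h.trans (Matrix.mulVec_zero Mᵀ).symm))
    have : x ⬝ᵥ ((M * Mᵀ) *ᵥ x) = (Mᵀ *ᵥ x) ⬝ᵥ (Mᵀ *ᵥ x) := by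
      rw [← Matrix.mulVec_mulVec, Matrix.dotProduct_mulVec, ← Matrix.mulVec_transpose]
    simpa [this] using dotProduct_star_self_pos_iff.2 hy

/-- The minimum value of `F` equals `½(b − Ar)ᵀ K⁻¹ (b − Ar)` with
`K = A GGᵀ Aᵀ + QQᵀ`. -/
theorem minimum_value_phi {m k : ℕ}
    (G : Matrix (Fin m) (Fin m) ℝ) (hG : IsUnit G.det)
    (Q : Matrix (Fin k) (Fin k) ℝ) (hQ : IsUnit Q.det)
    (A : Matrix (Fin k) (Fin m) ℝ) (r : Fin m → ℝ) (b : Fin k → ℝ)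
    (F : (Fin m → ℝ) → ℝ)
    (hF : ∀ x, F x = (1/2) * ((x - r) ⬝ᵥ ((G * Gᵀ)⁻¹ *ᵥ (x - r))) +
        (1/2) * ((A *ᵥ x - b) ⬝ᵥ ((Q * Qᵀ)⁻¹ *ᵥ (A *ᵥ x - b))))
    (Sinv : Matrix (Fin m) (Fin m) ℝ)
    (hSinv : Sinv = (G * Gᵀ)⁻¹ + Aᵀ * (Q * Qᵀ)⁻¹ * A)
    (μ : Fin m → ℝ)
    (hμ : μ = Sinv⁻¹ *ᵥ ((G * Gᵀ)⁻¹ *ᵥ r + Aᵀ *ᵥ ((Q * Qᵀ)⁻¹ *ᵥ b)))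
    (K : Matrix (Fin k) (Fin k) ℝ)
    (hK : K = A * (G * Gᵀ) * Aᵀ + Q * Qᵀ) :
    F μ = (1/2) * ((b - A *ᵥ r) ⬝ᵥ (K⁻¹ *ᵥ (b - A *ᵥ r))) := by
  set P0 : Matrix (Fin m) (Fin m) ℝ := G * Gᵀ with hP0def
  set R0 : Matrix (Fin k) (Fin k) ℝ := Q * Qᵀ with hR0def
  set P : Matrix (Fin m) (Fin m) ℝ := P0⁻¹ with hPdef
  set R : Matrix (Fin k) (Fin k) ℝ := R0⁻¹ with hRdef
  set S : Matrix (Fin m) (Fin m) ℝ := Sinv⁻¹ with hSdef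
  have hP0pd : P0.PosDef := posDef_mul_transpose G hG
  have hR0pd : R0.PosDef := posDef_mul_transpose Q hQ
  have hPpd : P.PosDef := hP0pd.inv
  have hRpd : R.PosDef := hR0pd.inv
  have hAtRA : (Aᵀ * R * A).PosSemidef := by
    have := hRpd.posSemidef.conjTranspose_mul_mul_same A
    rwa [conjTranspose_eq_transpose_of_trivial] at this
  have hSinvpd : Sinv.PosDef := by
    rw [hSinv]; exact hPpd.add_posSemidef hAtRA
  have hKpd : K.PosDef := by
    rw [hK]
    have := hP0pd.posSemidef.mul_mul_conjTranspose_same A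
    rw [conjTranspose_eq_transpose_of_trivial] at this
    exact Matrix.PosDef.posSemidef_add this hR0pd
  have hP0det : IsUnit P0.det := hP0pd.det_pos.ne'.isUnit
  have hR0det : IsUnit R0.det := hR0pd.det_pos.ne'.isUnit
  have hSinvdet : IsUnit Sinv.det := hSinvpd.det_pos.ne'.isUnit
  have cSS : Sinv * S = 1 := Matrix.mul_nonsing_inv _ hSinvdet
  have cSS' : S * Sinv = 1 := Matrix.nonsing_inv_mul _ hSinvdet
  have cP0P : P0 * P = 1 := Matrix.mul_nonsing_inv _ hP0det
  have cPP0 : P * P0 = 1 := Matrix.nonsing_inv_mul _ hP0det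
  have cR0R : R0 * R = 1 := Matrix.mul_nonsing_inv _ hR0det
  have cRR0 : R * R0 = 1 := Matrix.nonsing_inv_mul _ hR0det
  -- cancellation rules with a trailing factor (both target widths)
  have r1 : ∀ X : Matrix (Fin m) (Fin m) ℝ, S * (Sinv * X) = X := fun X => by
    rw [← Matrix.mul_assoc, cSS', Matrix.one_mul]
  have r1k : ∀ X : Matrix (Fin m) (Fin k) ℝ, S * (Sinv * X) = X := fun X => by
    rw [← Matrix.mul_assoc, cSS', Matrix.one_mul]
  have r2 : ∀ X : Matrix (Fin m) (Fin m) ℝ, Sinv * (S * X) = X := fun X => by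
    rw [← Matrix.mul_assoc, cSS, Matrix.one_mul]
  have r2k : ∀ X : Matrix (Fin m) (Fin k) ℝ, Sinv * (S * X) = X := fun X => by
    rw [← Matrix.mul_assoc, cSS, Matrix.one_mul]
  have r3 : ∀ X : Matrix (Fin m) (Fin m) ℝ, P0 * (P * X) = X := fun X => by
    rw [← Matrix.mul_assoc, cP0P, Matrix.one_mul]
  have r3k : ∀ X : Matrix (Fin m) (Fin k) ℝ, P0 * (P * X) = X := fun X => by
    rw [← Matrix.mul_assoc, cP0P, Matrix.one_mul]
  have r4 : ∀ X : Matrix (Fin m) (Fin m) ℝ, P * (P0 * X) = X := fun X => by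
    rw [← Matrix.mul_assoc, cPP0, Matrix.one_mul]
  have r4k : ∀ X : Matrix (Fin m) (Fin k) ℝ, P * (P0 * X) = X := fun X => by
    rw [← Matrix.mul_assoc, cPP0, Matrix.one_mul]
  have r5 : ∀ X : Matrix (Fin k) (Fin k) ℝ, R0 * (R * X) = X := fun X => by
    rw [← Matrix.mul_assoc, cR0R, Matrix.one_mul]
  have r5m : ∀ X : Matrix (Fin k) (Fin m) ℝ, R0 * (R * X) = X := fun X => by
    rw [← Matrix.mul_assoc, cR0R, Matrix.one_mul]
  have r6 : ∀ X : Matrix (Fin k) (Fin k) ℝ, R * (R0 * X) = X := fun X => by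
    rw [← Matrix.mul_assoc, cRR0, Matrix.one_mul]
  have r6m : ∀ X : Matrix (Fin k) (Fin m) ℝ, R * (R0 * X) = X := fun X => by
    rw [← Matrix.mul_assoc, cRR0, Matrix.one_mul]
  have hAtRA_eq : Aᵀ * (R * A) = Sinv - P := by
    rw [← Matrix.mul_assoc, hSinv]; abel
  have r7 : ∀ X : Matrix (Fin m) (Fin m) ℝ, Aᵀ * (R * (A * X)) = Sinv * X - P * X :=
    fun X => by
      rw [show Aᵀ * (R * (A * X)) = (Aᵀ * (R * A)) * X by
            simp only [Matrix.mul_assoc], hAtRA_eq, Matrix.sub_mul]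
  have r7k : ∀ X : Matrix (Fin m) (Fin k) ℝ, Aᵀ * (R * (A * X)) = Sinv * X - P * X :=
    fun X => by
      rw [show Aᵀ * (R * (A * X)) = (Aᵀ * (R * A)) * X by
            simp only [Matrix.mul_assoc], hAtRA_eq, Matrix.sub_mul]
  -- symmetry facts
  have hP0t : P0ᵀ = P0 := by rw [hP0def, transpose_mul, transpose_transpose]
  have hR0t : R0ᵀ = R0 := by rw [hR0def, transpose_mul, transpose_transpose]
  have hPt : Pᵀ = P := by rw [hPdef, Matrix.transpose_nonsing_inv, hP0t]
  have hRt : Rᵀ = R := by rw [hRdef, Matrix.transpose_nonsing_inv, hR0t]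
  have hSinvt : Sinvᵀ = Sinv := by
    rw [hSinv, transpose_add, hPt, transpose_mul, transpose_mul, transpose_transpose, hRt,
      Matrix.mul_assoc]
  have hSt : Sᵀ = S := by rw [hSdef, Matrix.transpose_nonsing_inv, hSinvt]
  -- Woodbury
  set W : Matrix (Fin k) (Fin k) ℝ := R - R * (A * (S * (Aᵀ * R))) with hWdef
  have hKW : K * W = 1 := by
    rw [hK, hWdef]
    simp only [Matrix.mul_sub, Matrix.sub_mul, Matrix.mul_add, Matrix.add_mul,
      Matrix.mul_assoc, r1, r1k, r2, r2k, r3, r3k, r4, r4k, r5, r5m, r6, r6m, r7, r7k,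
      cSS, cSS', cP0P, cPP0, cR0R, cRR0, Matrix.mul_one, Matrix.one_mul]
    abel
  have hKinv : K⁻¹ = W := Matrix.inv_eq_right_inv hKW
  set c : Fin k → ℝ := b - A *ᵥ r with hcdef
  set X : Matrix (Fin m) (Fin k) ℝ := S * (Aᵀ * R) with hXdef
  set Y : Matrix (Fin k) (Fin k) ℝ := A * X - 1 with hYdef
  -- vector cancellation rules
  have v1 : ∀ x : Fin m → ℝ, Aᵀ *ᵥ (R *ᵥ (A *ᵥ x)) = Sinv *ᵥ x - P *ᵥ x := fun x => by
    rw [Matrix.mulVec_mulVec, Matrix.mulVec_mulVec, Matrix.mul_assoc, hAtRA_eq, Matrix.sub_mulVec]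
  have v2 : ∀ x : Fin m → ℝ, S *ᵥ (Sinv *ᵥ x) = x := fun x => by
    rw [Matrix.mulVec_mulVec, cSS', Matrix.one_mulVec]
  have hμr : μ - r = X *ᵥ c := by
    rw [hμ, hcdef, hXdef]
    simp only [← Matrix.mulVec_mulVec, Matrix.mulVec_sub, Matrix.mulVec_add, v1, v2]
    abel
  have hAμb : A *ᵥ μ - b = Y *ᵥ c := by
    have h0 : A *ᵥ μ - b = A *ᵥ (μ - r) - c := by
      rw [Matrix.mulVec_sub, hcdef]; abel
    rw [h0, hμr, hYdef, Matrix.sub_mulVec, Matrix.mulVec_mulVec, Matrix.one_mulVec]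
  have quad : ∀ {n p : ℕ} (M : Matrix (Fin n) (Fin p) ℝ) (N : Matrix (Fin n) (Fin n) ℝ)
      (v : Fin p → ℝ), (M *ᵥ v) ⬝ᵥ (N *ᵥ (M *ᵥ v)) = v ⬝ᵥ ((Mᵀ * (N * M)) *ᵥ v) := by
    intro n p M N v
    simp only [Matrix.dotProduct_mulVec]
    simp only [← Matrix.vecMul_vecMul]
    rw [Matrix.vecMul_transpose]
  have hXt : Xᵀ = R * (A * S) := by
    rw [hXdef, transpose_mul, transpose_mul, transpose_transpose, hRt, hSt, Matrix.mul_assoc]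
  have hYt : Yᵀ = Xᵀ * Aᵀ - 1 := by
    rw [hYdef, transpose_sub, transpose_mul, transpose_one]
  have keyid : Xᵀ * (P * X) + Yᵀ * (R * Y) = W := by
    rw [hYt, hXt, hXdef, hYdef, hWdef]
    simp only [Matrix.mul_sub, Matrix.sub_mul, Matrix.mul_add, Matrix.add_mul,
      Matrix.mul_assoc, r1, r1k, r2, r2k, r3, r3k, r4, r4k, r5, r5m, r6, r6m, r7, r7k,
      cSS, cSS', cP0P, cPP0, cR0R, cRR0, Matrix.mul_one, Matrix.one_mul]
    abel
  rw [hF μ, hμr, hAμb, hKinv, quad, quad, ← mul_add, ← dotProduct_add, ← Matrix.add_mulVec,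
    keyid]
end

section
/- Sum over directions recovers total probability: if F : ℝⁿ → ℝ is C¹, strictly convex, coercive with minimum φ at μ, and for each ξ ≠ 0 we define X(ξ) = μ + λ(ξ) ξ/‖ξ‖ with λ(ξ) > 0 the unique solution of F(X(ξ)) = φ + ½‖ξ‖², then the map ξ ↦ X(ξ) (extended by X(0) = μ) is a bijection from ℝⁿ to ℝⁿ. -/
/-- The implicit sampling map with `L = I` is a bijection of `ℝⁿ`: for strictly convex,
coercive, `C¹` `F` with minimizer `μ` and `φ = F μ`, the map
`ξ ↦ μ + λ(ξ) ξ/‖ξ‖` (with `λ(ξ) > 0` the unique solution of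
`F(X(ξ)) = φ + ½‖ξ‖²`, and `X(0) = μ`) is one-to-one and onto. -/
theorem implicit_sampling_map_bijective {n : ℕ}
    (F : EuclideanSpace ℝ (Fin n) → ℝ) (hF : ContDiff ℝ 1 F)
    (hconv : StrictConvexOn ℝ Set.univ F)
    (hcoer : Filter.Tendsto F (Filter.cocompact _) Filter.atTop)
    (μ : EuclideanSpace ℝ (Fin n)) (hmin : ∀ x, F μ ≤ F x)
    (lam : EuclideanSpace ℝ (Fin n) → ℝ)
    (hlam : ∀ ξ, ξ ≠ 0 → 0 < lam ξ ∧
      F (μ + lam ξ • (‖ξ‖⁻¹ • ξ)) = F μ + (1 / 2) * ‖ξ‖ ^ 2)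
    (huniq : ∀ ξ, ξ ≠ 0 → ∀ t > (0 : ℝ),
      F (μ + t • (‖ξ‖⁻¹ • ξ)) = F μ + (1 / 2) * ‖ξ‖ ^ 2 → t = lam ξ)
    (X : EuclideanSpace ℝ (Fin n) → EuclideanSpace ℝ (Fin n))
    (hX0 : X 0 = μ)
    (hX : ∀ ξ, ξ ≠ 0 → X ξ = μ + (lam ξ / ‖ξ‖) • ξ) :
    Function.Bijective X := by
  -- Rewrite `X ξ` in the form appearing in `hlam`.
  have hXform : ∀ ξ : EuclideanSpace ℝ (Fin n), ξ ≠ 0 →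
      X ξ = μ + lam ξ • (‖ξ‖⁻¹ • ξ) := by
    intro ξ hξ
    rw [hX ξ hξ, smul_smul, div_eq_mul_inv]
  have hXne : ∀ ξ : EuclideanSpace ℝ (Fin n), ξ ≠ 0 → X ξ ≠ μ := by
    intro ξ hξ h
    have hl := (hlam ξ hξ).1
    have hn : (0:ℝ) < ‖ξ‖ := norm_pos_iff.mpr hξ
    have : (lam ξ / ‖ξ‖) • ξ = 0 := by
      have := hX ξ hξ
      rw [h] at this
      have h2 : μ + (lam ξ / ‖ξ‖) • ξ = μ + 0 := by
        rw [add_zero]; exact this.symm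
      exact add_left_cancel h2
    rcases smul_eq_zero.mp this with hc | hc
    · exact (div_pos hl hn).ne' hc
    · exact hξ hc
  constructor
  · -- injectivity
    intro ξ₁ ξ₂ h
    by_cases h1 : ξ₁ = 0
    · by_cases h2 : ξ₂ = 0
      · rw [h1, h2]
      · exact absurd (by rw [← h, h1, hX0]) (hXne ξ₂ h2)
    · by_cases h2 : ξ₂ = 0
      · exact absurd (by rw [h, h2, hX0]) (hXne ξ₁ h1)
      · have hF1 := (hlam ξ₁ h1).2
        have hF2 := (hlam ξ₂ h2).2
        have hXF : F (X ξ₁) = F (X ξ₂) := by rw [h]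
        rw [hXform ξ₁ h1, hXform ξ₂ h2, hF1, hF2] at hXF
        have hnorm : ‖ξ₁‖ = ‖ξ₂‖ := by
          have : ‖ξ₁‖ ^ 2 = ‖ξ₂‖ ^ 2 := by linarith
          calc ‖ξ₁‖ = Real.sqrt (‖ξ₁‖ ^ 2) := (Real.sqrt_sq (norm_nonneg _)).symm
            _ = Real.sqrt (‖ξ₂‖ ^ 2) := by rw [this]
            _ = ‖ξ₂‖ := Real.sqrt_sq (norm_nonneg _)
        have hl1 := (hlam ξ₁ h1).1
        have hl2 := (hlam ξ₂ h2).1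
        have hn1 : (0:ℝ) < ‖ξ₁‖ := norm_pos_iff.mpr h1
        have hn2 : (0:ℝ) < ‖ξ₂‖ := norm_pos_iff.mpr h2
        have hsmul : (lam ξ₁ / ‖ξ₁‖) • ξ₁ = (lam ξ₂ / ‖ξ₂‖) • ξ₂ := by
          have := h
          rw [hX ξ₁ h1, hX ξ₂ h2] at this
          exact add_left_cancel this
        have hlameq : lam ξ₁ = lam ξ₂ := by
          have := congrArg norm hsmul
          rw [norm_smul, norm_smul] at this
          simp only [Real.norm_eq_abs, abs_of_pos (div_pos hl1 hn1),
            abs_of_pos (div_pos hl2 hn2)] at this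
          rw [div_mul_cancel₀ _ hn1.ne', div_mul_cancel₀ _ hn2.ne'] at this
          exact this
        rw [hlameq, hnorm] at hsmul
        exact smul_right_injective _ (div_pos hl2 hn2).ne' hsmul
  · -- surjectivity
    intro x
    by_cases hx : x = μ
    · exact ⟨0, by rw [hX0, hx]⟩
    · -- F x > F μ by strict convexity
      have hgt : F μ < F x := by
        rcases lt_or_eq_of_le (hmin x) with h | h
        · exact h
        · exfalso
          have := hconv.2 (Set.mem_univ x) (Set.mem_univ μ) hx
            (by norm_num : (0:ℝ) < 1/2) (by norm_num : (0:ℝ) < 1/2) (by norm_num)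
          rw [← h] at this
          simp only [smul_eq_mul] at this
          have hle := hmin ((1/2 : ℝ) • x + (1/2 : ℝ) • μ)
          linarith
      set r := Real.sqrt (2 * (F x - F μ)) with hr
      have hr2 : r ^ 2 = 2 * (F x - F μ) := Real.sq_sqrt (by linarith)
      have hrpos : 0 < r := Real.sqrt_pos.mpr (by linarith)
      have hxm : x - μ ≠ 0 := sub_ne_zero.mpr hx
      have ht : (0:ℝ) < ‖x - μ‖ := norm_pos_iff.mpr hxm
      set d : EuclideanSpace ℝ (Fin n) := ‖x - μ‖⁻¹ • (x - μ) with hd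
      set ξ : EuclideanSpace ℝ (Fin n) := r • d with hξdef
      have hnd : ‖d‖ = 1 := by
        rw [hd, norm_smul, Real.norm_eq_abs, abs_of_pos (inv_pos.mpr ht),
          inv_mul_cancel₀ ht.ne']
      have hnξ : ‖ξ‖ = r := by
        rw [hξdef, norm_smul, Real.norm_eq_abs, abs_of_pos hrpos, hnd, mul_one]
      have hξne : ξ ≠ 0 := by
        intro h; rw [h, norm_zero] at hnξ; exact hrpos.ne hnξ
      have hdir : ‖ξ‖⁻¹ • ξ = d := by
        rw [hnξ, hξdef, smul_smul, inv_mul_cancel₀ hrpos.ne', one_smul]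
      have hμtd : μ + ‖x - μ‖ • d = x := by
        rw [hd, smul_smul, mul_inv_cancel₀ ht.ne', one_smul]
        abel
      have hFeq : F (μ + ‖x - μ‖ • (‖ξ‖⁻¹ • ξ)) = F μ + (1 / 2) * ‖ξ‖ ^ 2 := by
        rw [hdir, hμtd, hnξ, hr2]; ring
      have hteq : ‖x - μ‖ = lam ξ := huniq ξ hξne _ ht hFeq
      refine ⟨ξ, ?_⟩
      rw [hXform ξ hξne, hdir, ← hteq, hμtd]
end
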